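/- In the group H = ⟨a, t | [tat⁻¹, a] = aⁿ⟩, the identity [taⁿt⁻¹, aⁿ] = a^{n((n+1)ⁿ - 1)} holds. Consequently, the image of aⁿ in the abelianization of the normal closure ⟪aⁿ⟫_H has finite order, so H₁(⟪aⁿ⟫_H, ℚ) sees aⁿ as trivial. -/

import Mathlib

open scoped TensorProduct
open scoped commutatorElement

/-- The group `H = ⟨a, t ∣ [tat⁻¹, a] = aⁿ⟩`, presented on two generators `a`
(encoded by `true`) and `t` (encoded by `false`). -/
def HnRels (n : ℕ) : Set (FreeGroup Bool) :=
  {⁅FreeGroup.of false * FreeGroup.of true * (FreeGroup.of false)⁻¹, FreeGroup.of true⁆ *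
    ((FreeGroup.of true) ^ n)⁻¹}

/-- The generator `a` of `H`. -/
def aH (n : ℕ) : PresentedGroup (HnRels n) := PresentedGroup.of true

/-- The generator `t` of `H`. -/
def tH (n : ℕ) : PresentedGroup (HnRels n) := PresentedGroup.of false

/-- in `H = ⟨a, t ∣ [tat⁻¹, a] = aⁿ⟩` the identity
`[taⁿt⁻¹, aⁿ] = a^{n((n+1)ⁿ - 1)}` holds.  Consequently, the image of `aⁿ` in
the abelianization of the normal closure `⟪aⁿ⟫_H` has finite order, so that
`H₁(⟪aⁿ⟫_H, ℚ) = ℚ ⊗_ℤ (⟪aⁿ⟫_H)_{ab}` sees `aⁿ` as trivial. -/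

lemma rel_key (n : ℕ) :
    (tH n * aH n * (tH n)⁻¹) * aH n * (tH n * aH n * (tH n)⁻¹)⁻¹ = (aH n) ^ (n + 1) := by
  have hmem : (⁅FreeGroup.of false * FreeGroup.of true * (FreeGroup.of false)⁻¹,
      FreeGroup.of true⁆ * ((FreeGroup.of true : FreeGroup Bool) ^ n)⁻¹) ∈
      Subgroup.normalClosure (HnRels n) := Subgroup.subset_normalClosure rfl
  have h : PresentedGroup.mk (HnRels n)
      (⁅FreeGroup.of false * FreeGroup.of true * (FreeGroup.of false)⁻¹,
      FreeGroup.of true⁆ * ((FreeGroup.of true : FreeGroup Bool) ^ n)⁻¹) = 1 :=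
    (QuotientGroup.eq_one_iff _).mpr hmem
  simp only [map_mul, map_inv, map_pow, commutatorElement_def] at h
  have h' : ⁅tH n * aH n * (tH n)⁻¹, aH n⁆ = (aH n) ^ n := by
    rw [commutatorElement_def]
    exact mul_inv_eq_one.mp h
  have := h'
  rw [commutatorElement_def] at this
  calc (tH n * aH n * (tH n)⁻¹) * aH n * (tH n * aH n * (tH n)⁻¹)⁻¹
      = ⁅tH n * aH n * (tH n)⁻¹, aH n⁆ * aH n := by
        rw [commutatorElement_def]; group
    _ = (aH n) ^ n * aH n := by rw [h']
    _ = (aH n) ^ (n + 1) := by rw [pow_succ]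

theorem stmt_19_main (n : ℕ) :
    ⁅tH n * (aH n) ^ n * (tH n)⁻¹, (aH n) ^ n⁆ = (aH n) ^ (n * ((n + 1) ^ n - 1)) := by
  set A := aH n
  set T := tH n
  set B := T * A * T⁻¹ with hB
  have hk : 1 ≤ (n + 1) ^ n := Nat.one_le_pow _ _ (Nat.succ_pos n)
  have hBA : B * A * B⁻¹ = A ^ (n + 1) := rel_key n
  have hconj : ∀ k : ℕ, B ^ k * A * (B ^ k)⁻¹ = A ^ ((n + 1) ^ k) := by
    intro k
    induction k with
    | zero => simp
    | succ k ih =>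
      have : B ^ (k + 1) * A * (B ^ (k + 1))⁻¹ = B * (B ^ k * A * (B ^ k)⁻¹) * B⁻¹ := by
        rw [pow_succ']; group
      rw [this, ih, ← conj_pow, hBA, ← pow_mul, pow_succ, Nat.mul_comm]
  have hTpow : T * A ^ n * T⁻¹ = B ^ n := by rw [hB, conj_pow]
  have hBn : B ^ n * A ^ n * (B ^ n)⁻¹ = A ^ ((n + 1) ^ n * n) := by
    rw [← conj_pow, hconj n, ← pow_mul]
  rw [commutatorElement_def, hTpow]
  have harith : n * ((n + 1) ^ n - 1) + n = (n + 1) ^ n * n := by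
    have : n * ((n + 1) ^ n - 1) + n * 1 = n * ((n + 1) ^ n - 1 + 1) := (mul_add n _ _).symm
    rw [mul_one] at this
    rw [this, Nat.sub_add_cancel hk, Nat.mul_comm]
  calc B ^ n * A ^ n * (B ^ n)⁻¹ * (A ^ n)⁻¹
      = A ^ ((n + 1) ^ n * n) * (A ^ n)⁻¹ := by rw [hBn]
    _ = A ^ (n * ((n + 1) ^ n - 1)) := by
        rw [← harith, pow_add]; group

theorem stmt_19 (n : ℕ) :
    ⁅tH n * (aH n) ^ n * (tH n)⁻¹, (aH n) ^ n⁆ = (aH n) ^ (n * ((n + 1) ^ n - 1)) ∧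
      (∃ m : ℕ, 0 < m ∧
        (Abelianization.of
          (⟨(aH n) ^ n, Subgroup.subset_normalClosure rfl⟩ :
            Subgroup.normalClosure {(aH n) ^ n})) ^ m = 1) ∧
      ((1 : ℚ) ⊗ₜ[ℤ] Additive.ofMul
          (Abelianization.of
            (⟨(aH n) ^ n, Subgroup.subset_normalClosure rfl⟩ :
              Subgroup.normalClosure {(aH n) ^ n})) :
        TensorProduct ℤ ℚ
          (Additive (Abelianization (Subgroup.normalClosure {(aH n) ^ n})))) = 0 := by
  have hmain := stmt_19_main n
  set N := Subgroup.normalClosure {(aH n) ^ n} with hN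
  set x : N := ⟨(aH n) ^ n, Subgroup.subset_normalClosure rfl⟩ with hx
  -- finite order of the abelianization image
  have hfin : ∃ m : ℕ, 0 < m ∧ (Abelianization.of x) ^ m = 1 := by
    rcases Nat.eq_zero_or_pos n with hn | hn
    · refine ⟨1, one_pos, ?_⟩
      have : x = 1 := by
        apply Subtype.ext
        simp [hx, hn]
      rw [this]
      simp
    · refine ⟨(n + 1) ^ n - 1, ?_, ?_⟩
      · have : 2 ≤ n + 1 := by omega
        have h2 : 2 ^ n ≤ (n + 1) ^ n := Nat.pow_le_pow_left this n
        have h3 : 2 ≤ 2 ^ n := by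
          calc 2 = 2 ^ 1 := (pow_one 2).symm
          _ ≤ 2 ^ n := Nat.pow_le_pow_right (by norm_num) hn
        omega
      · set u : N := ⟨tH n * (aH n) ^ n * (tH n)⁻¹,
          (Subgroup.normalClosure_normal).conj_mem _ x.2 (tH n)⟩ with hu
        have hcomm : ⁅u, x⁆ = x ^ ((n + 1) ^ n - 1) := by
          apply Subtype.ext
          have hc : ((⁅u, x⁆ : N) : PresentedGroup (HnRels n)) =
              ⁅tH n * (aH n) ^ n * (tH n)⁻¹, (aH n) ^ n⁆ := by
            simp [commutatorElement_def, hu, hx]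
          rw [hc, hmain]
          push_cast
          rw [← pow_mul]
        have : (Abelianization.of x) ^ ((n + 1) ^ n - 1) = Abelianization.of ⁅u, x⁆ := by
          rw [hcomm, map_pow]
        rw [this, map_commutatorElement]
        exact commutatorElement_eq_one_iff_commute.mpr (mul_comm _ _)
  refine ⟨hmain, hfin, ?_⟩
  obtain ⟨m, hm0, hm⟩ := hfin
  set y := Additive.ofMul (Abelianization.of x) with hy
  have hzy : (m : ℤ) • y = 0 := by
    rw [hy, ← ofMul_zpow, zpow_natCast, hm]
    rfl
  have hmQ : (m : ℚ) ≠ 0 := Nat.cast_ne_zero.mpr hm0.ne'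
  calc (1 : ℚ) ⊗ₜ[ℤ] y = ((m : ℚ)⁻¹ * (m : ℚ)) ⊗ₜ[ℤ] y := by rw [inv_mul_cancel₀ hmQ]
    _ = ((m : ℤ) • (m : ℚ)⁻¹) ⊗ₜ[ℤ] y := by
        rw [zsmul_eq_mul]; push_cast; ring_nf
    _ = (m : ℚ)⁻¹ ⊗ₜ[ℤ] ((m : ℤ) • y) := by rw [TensorProduct.smul_tmul]
    _ = (m : ℚ)⁻¹ ⊗ₜ[ℤ] (0 : Additive (Abelianization N)) := by rw [hzy]
    _ = 0 := TensorProduct.tmul_zero _ _
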